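/- Let G be a finite connected multigraph without self-loops on vertex set V, with graph lattice Λ(G) = ℤ^V/ℤ[V]. Then the following are equivalent: (i) G is 2-connected, i.e. for every vertex v ∈ V the sub-multigraph induced on V∖{v} is connected; (ii) for every vertex v ∈ V, the class of [v] in Λ(G) is irreducible; (iii) Λ(G) is indecomposable. -/

import Mathlib

/-- The bilinear form of the multigraph with edge multiplicities `ε`:
`x·y = Σ_v d(v) x_v y_v − Σ_{v≠w} ε(v,w) x_v y_w`, where `d(v) = Σ_w ε(v,w)`. -/
def gform {V : Type*} [Fintype V] [DecidableEq V] (ε : V → V → ℕ) (x y : V → ℤ) : ℤ :=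
  (∑ v, (∑ w, (ε v w : ℤ)) * (x v * y v)) -
    ∑ v, ∑ w ∈ Finset.univ.filter (· ≠ v), (ε v w : ℤ) * (x v * y w)

/-- The simple graph underlying the multigraph with edge multiplicities `ε`. -/
def gGraph {V : Type*} (ε : V → V → ℕ) : SimpleGraph V :=
  SimpleGraph.fromRel (fun v w => 0 < ε v w)

/-- Connectivity of the sub-multigraph induced on the set `S`. -/
def gConnOn {V : Type*} (ε : V → V → ℕ) (S : Set V) : Prop :=
  (SimpleGraph.fromRel (fun v w : S => 0 < ε v.1 w.1)).Connected

/-- `ℤ[V]`, the span of the all-ones vector `[V]` in `ℤ^V`. -/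
def onesSub (V : Type*) : Submodule ℤ (V → ℤ) :=
  Submodule.span ℤ ({fun _ => (1 : ℤ)} : Set (V → ℤ))

/-- The characteristic vector `[R] ∈ ℤ^V` of a finite set of vertices. -/
def chiF {V : Type*} [DecidableEq V] (R : Finset V) : V → ℤ :=
  fun v => if v ∈ R then 1 else 0

/-- Irreducibility, in the graph lattice `Λ(G) = ℤ^V/ℤ[V]`, of the class of
`z : ℤ^V`, stated on representatives: the class of `z` cannot be written as
`x + y` with `x, y` nonzero classes and `x·y ≥ 0`. -/
def gIrredRep {V : Type*} [Fintype V] [DecidableEq V] (ε : V → V → ℕ) (z : V → ℤ) : Prop :=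
  ¬ ∃ x y : V → ℤ, x ∉ onesSub V ∧ y ∉ onesSub V ∧
      z - (x + y) ∈ onesSub V ∧ 0 ≤ gform ε x y

section aux3x
set_option linter.unusedSectionVars false
set_option linter.unusedVariables false

variable {V : Type*} [Fintype V] [DecidableEq V]

lemma mem_onesSub {x : V → ℤ} : x ∈ onesSub V ↔ ∃ c : ℤ, ∀ w, x w = c := by
  constructor
  · intro h
    rw [onesSub, Submodule.mem_span_singleton] at h
    obtain ⟨c, hc⟩ := h
    exact ⟨c, fun w => by rw [← hc]; simp⟩
  · rintro ⟨c, hc⟩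
    rw [onesSub, Submodule.mem_span_singleton]
    exact ⟨c, by funext w; simp [hc w]⟩

lemma chiF_single (a w : V) : chiF {a} w = if w = a then 1 else 0 := by simp [chiF]

lemma chiF_not_mem (hcard : 2 ≤ Fintype.card V) (a : V) : chiF {a} ∉ onesSub V := by
  obtain ⟨b, hb⟩ := Fintype.exists_ne_of_one_lt_card (by omega) a
  intro h
  obtain ⟨c, hc⟩ := mem_onesSub.mp h
  have h1 := hc a
  have h2 := hc b
  simp [chiF_single, hb] at h1 h2
  omega

variable (ε : V → V → ℕ)

lemma gform_eq (hloop : ∀ v, ε v v = 0) (x y : V → ℤ) :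
    gform ε x y = ∑ v, ∑ w, (ε v w : ℤ) * (x v * (y v - y w)) := by
  unfold gform
  have h2 : ∀ v : V, ∑ w ∈ Finset.univ.filter (· ≠ v), (ε v w : ℤ) * (x v * y w)
      = ∑ w, (ε v w : ℤ) * (x v * y w) := by
    intro v
    refine Finset.sum_subset (Finset.filter_subset _ _) ?_
    intro w _ hw
    have : w = v := by simpa using hw
    simp [this, hloop v]
  simp_rw [h2, Finset.sum_mul, ← Finset.sum_sub_distrib]
  exact Finset.sum_congr rfl fun v _ => Finset.sum_congr rfl fun w _ => by ring

lemma two_gform (hsymm : ∀ v w, ε v w = ε w v) (hloop : ∀ v, ε v v = 0) (x y : V → ℤ) :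
    2 * gform ε x y = ∑ v, ∑ w, (ε v w : ℤ) * ((x v - x w) * (y v - y w)) := by
  have h1 := gform_eq ε hloop x y
  have h2 : gform ε x y = ∑ v, ∑ w, (ε v w : ℤ) * (x w * (y w - y v)) := by
    rw [h1, Finset.sum_comm]
    exact Finset.sum_congr rfl fun v _ => Finset.sum_congr rfl fun w _ => by
      rw [hsymm v w]
  rw [two_mul]
  nth_rewrite 1 [h1]
  rw [h2, ← Finset.sum_add_distrib]
  refine Finset.sum_congr rfl fun v _ => ?_
  rw [← Finset.sum_add_distrib]
  exact Finset.sum_congr rfl fun w _ => by ring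

lemma gform_comm (hsymm : ∀ v w, ε v w = ε w v) (hloop : ∀ v, ε v v = 0) (x y : V → ℤ) :
    gform ε x y = gform ε y x := by
  have h := two_gform ε hsymm hloop x y
  have h' := two_gform ε hsymm hloop y x
  have heq : ∑ v, ∑ w, (ε v w : ℤ) * ((x v - x w) * (y v - y w))
      = ∑ v, ∑ w, (ε v w : ℤ) * ((y v - y w) * (x v - x w)) :=
    Finset.sum_congr rfl fun v _ => Finset.sum_congr rfl fun w _ => by ring
  rw [heq] at h
  rw [← h'] at h
  linarith

lemma gform_congr_right (hloop : ∀ v, ε v v = 0) (x : V → ℤ) {y y' : V → ℤ}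
    (h : y' - y ∈ onesSub V) : gform ε x y' = gform ε x y := by
  obtain ⟨c, hc⟩ := mem_onesSub.mp h
  have hy' : ∀ w, y' w = y w + c := by
    intro w
    have := hc w
    simp only [Pi.sub_apply] at this
    linarith
  rw [gform_eq ε hloop, gform_eq ε hloop]
  refine Finset.sum_congr rfl fun v _ => Finset.sum_congr rfl fun w _ => ?_
  rw [hy' v, hy' w]; ring

lemma gform_congr_left (hsymm : ∀ v w, ε v w = ε w v) (hloop : ∀ v, ε v v = 0)
    {x x' : V → ℤ} (y : V → ℤ) (h : x' - x ∈ onesSub V) : gform ε x' y = gform ε x y := by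
  rw [gform_comm ε hsymm hloop, gform_congr_right ε hloop y h, gform_comm ε hsymm hloop]

lemma gform_chi_chi (hloop : ∀ v, ε v v = 0) {a b : V} (hab : a ≠ b) :
    gform ε (chiF {a}) (chiF {b}) = -(ε a b : ℤ) := by
  unfold gform
  have h1 : ∑ v, (∑ w, (ε v w : ℤ)) * (chiF {a} v * chiF {b} v) = 0 := by
    apply Finset.sum_eq_zero; intro v _
    rcases eq_or_ne v a with rfl | h
    · simp [chiF_single, hab]
    · simp [chiF_single, h]
  rw [h1]
  have h2 : ∑ v, ∑ w ∈ Finset.univ.filter (· ≠ v), (ε v w : ℤ) * (chiF {a} v * chiF {b} w)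
      = (ε a b : ℤ) := by
    rw [Finset.sum_eq_single a]
    · rw [Finset.sum_eq_single b]
      · simp [chiF_single, hab.symm]
      · intro w _ hwb; simp [chiF_single, hwb]
      · intro hb; exact absurd (by simp [hab.symm]) hb
    · intro v _ hva
      apply Finset.sum_eq_zero; intro w _
      simp [chiF_single, hva]
    · simp
  rw [h2]; ring

lemma reach_prop {α : Type*} {G : SimpleGraph α} {P : α → Prop}
    (hP : ∀ u v, G.Adj u v → P u → P v) {u v : α} (h : G.Reachable u v) : P u → P v := by
  obtain ⟨w⟩ := h
  induction w with
  | nil => exact id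
  | cons h _ ih => exact fun hu => ih (hP _ _ h hu)

lemma pi_eq_sum (x : V → ℤ) : x = ∑ v, x v • chiF {v} := by
  funext w
  rw [Finset.sum_apply, Finset.sum_eq_single w]
  · simp [chiF_single]
  · intro v _ hvw; simp [chiF_single, hvw.symm]
  · simp

lemma quot_gen {L : Submodule ℤ ((V → ℤ) ⧸ onesSub V)}
    (h : ∀ v, (onesSub V).mkQ (chiF {v}) ∈ L) (z : (V → ℤ) ⧸ onesSub V) : z ∈ L := by
  obtain ⟨x, rfl⟩ := (onesSub V).mkQ_surjective z
  rw [pi_eq_sum x, map_sum]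
  exact Submodule.sum_mem _ fun v _ => by
    rw [map_smul]; exact Submodule.smul_mem _ _ (h v)

lemma int_key (t s : ℤ) (hs : s = 1 ∨ s = 0 ∨ s = -1) : t * (s - t) ≤ 0 := by
  rcases hs with rfl | rfl | rfl
  · rcases le_or_gt t 0 with h | h <;> nlinarith [sq_nonneg t, sq_nonneg (t - 1)]
  · nlinarith [sq_nonneg t]
  · rcases le_or_gt 0 t with h | h <;> nlinarith [sq_nonneg t, sq_nonneg (t + 1)]

lemma main1 (hcard : 2 ≤ Fintype.card V) (hsymm : ∀ v w, ε v w = ε w v)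
    (hloop : ∀ v, ε v v = 0) (hconn : (gGraph ε).Connected)
    (hc2 : ∀ v : V, gConnOn ε ({v}ᶜ : Set V)) (a : V) : gIrredRep ε (chiF {a}) := by
  rintro ⟨x, y, hx, hy, hsum, hpos⟩
  set y' : V → ℤ := chiF {a} - x with hy'def
  have hyy : y' - y ∈ onesSub V := by
    have h : y' - y = chiF {a} - (x + y) := by
      rw [hy'def]; abel
    rw [h]; exact hsum
  have hy'mem : y' ∉ onesSub V := by
    intro h
    apply hy
    have h2 : y = y' - (y' - y) := by abel
    rw [h2]; exact Submodule.sub_mem _ h hyy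
  have hpos' : 0 ≤ gform ε x y' := by
    rwa [gform_congr_right ε hloop x hyy]
  have hD : 0 ≤ ∑ v, ∑ w, (ε v w : ℤ) * ((x v - x w) * (y' v - y' w)) := by
    rw [← two_gform ε hsymm hloop]; linarith
  have hterm : ∀ v w : V, (ε v w : ℤ) * ((x v - x w) * (y' v - y' w)) ≤ 0 := by
    intro v w
    have key : (x v - x w) * (y' v - y' w) ≤ 0 := by
      have hyv : y' v = chiF {a} v - x v := rfl
      have hyw : y' w = chiF {a} w - x w := rfl
      have hs : chiF {a} v - chiF {a} w = 1 ∨ chiF {a} v - chiF {a} w = 0 ∨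
          chiF {a} v - chiF {a} w = -1 := by
        simp only [chiF_single]; split_ifs <;> simp
      have hrw : y' v - y' w = (chiF {a} v - chiF {a} w) - (x v - x w) := by
        rw [hyv, hyw]; ring
      rw [hrw]
      exact int_key _ _ hs
    exact mul_nonpos_of_nonneg_of_nonpos (by positivity) key
  have hzero : ∀ v w : V, (ε v w : ℤ) * ((x v - x w) * (y' v - y' w)) = 0 := by
    have houter : ∀ v ∈ Finset.univ, (∑ w, (ε v w : ℤ) * ((x v - x w) * (y' v - y' w))) ≤ 0 :=
      fun v _ => Finset.sum_nonpos fun w _ => hterm v w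
    have h0 : ∑ v, ∑ w, (ε v w : ℤ) * ((x v - x w) * (y' v - y' w)) = 0 :=
      le_antisymm (Finset.sum_nonpos houter) hD
    intro v w
    have hv := (Finset.sum_eq_zero_iff_of_nonpos houter).mp h0 v (Finset.mem_univ v)
    exact (Finset.sum_eq_zero_iff_of_nonpos fun w _ => hterm v w).mp hv w (Finset.mem_univ w)
  -- x is constant on the complement of a
  have hflat : ∀ p q : V, p ≠ a → q ≠ a → 0 < ε p q → x p = x q := by
    intro p q hp hq hpq
    have h1 := hzero p q
    have hε : ((ε p q : ℤ)) ≠ 0 := by exact_mod_cast hpq.ne'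
    have h2 : (x p - x q) * (y' p - y' q) = 0 := by
      rcases mul_eq_zero.mp h1 with h | h
      · exact absurd h hε
      · exact h
    have hY : y' p - y' q = -(x p - x q) := by
      have : y' p = chiF {a} p - x p := rfl
      have h2 : y' q = chiF {a} q - x q := rfl
      rw [this, h2]
      simp only [chiF_single, if_neg hp, if_neg hq]
      ring
    rw [hY] at h2
    have ht : x p - x q = 0 := by
      have : (x p - x q) * (x p - x q) = 0 := by linarith [h2]
      exact mul_self_eq_zero.mp this
    linarith
  obtain ⟨b, hb⟩ := Fintype.exists_ne_of_one_lt_card (by omega) a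
  have hconst : ∀ w : V, w ≠ a → x w = x b := by
    intro w hw
    have hcomp := hc2 a
    unfold gConnOn at hcomp
    have hbm : b ∈ ({a}ᶜ : Set V) := by simp [hb]
    have hwm : w ∈ ({a}ᶜ : Set V) := by simp [hw]
    have hreach := hcomp.preconnected ⟨b, hbm⟩ ⟨w, hwm⟩
    refine reach_prop (P := fun s : ({a}ᶜ : Set V) => x s.1 = x b) ?_ hreach rfl
    intro u v huv hu
    rw [SimpleGraph.fromRel_adj] at huv
    obtain ⟨hne, hor⟩ := huv
    have hu_ne : u.1 ≠ a := u.2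
    have hv_ne : v.1 ≠ a := v.2
    have : x u.1 = x v.1 := by
      rcases hor with h | h
      · exact hflat u.1 v.1 hu_ne hv_ne h
      · exact (hflat v.1 u.1 hv_ne hu_ne h).symm
    rw [← this]; exact hu
  -- a has a neighbor
  have hnb : ∃ q, q ≠ a ∧ 0 < ε a q := by
    by_contra h
    push_neg at h
    have hzero' : ∀ q, ε a q = 0 := by
      intro q
      rcases eq_or_ne q a with rfl | hq
      · exact hloop q
      · exact Nat.le_zero.mp (h q hq)
    have hb' := hconn.preconnected a b
    have : b = a := by
      refine reach_prop (G := gGraph ε) (P := fun w => w = a) ?_ hb' rfl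
      intro p q hpq hp
      subst hp
      rw [gGraph, SimpleGraph.fromRel_adj] at hpq
      obtain ⟨hne, hor⟩ := hpq
      exfalso
      rcases hor with h' | h'
      · rw [hzero' q] at h'; exact absurd h' (lt_irrefl 0)
      · rw [hsymm q p, hzero' q] at h'; exact absurd h' (lt_irrefl 0)
    exact hb this
  obtain ⟨q, hq, hq2⟩ := hnb
  have hxq : x q = x b := hconst q hq
  have h1 := hzero a q
  have hε : ((ε a q : ℤ)) ≠ 0 := by exact_mod_cast hq2.ne'
  have h2 : (x a - x q) * (y' a - y' q) = 0 := by
    rcases mul_eq_zero.mp h1 with h | h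
    · exact absurd h hε
    · exact h
  have hY : y' a - y' q = 1 - (x a - x q) := by
    have ha' : y' a = chiF {a} a - x a := rfl
    have hq' : y' q = chiF {a} q - x q := rfl
    rw [ha', hq']
    simp [chiF_single, hq]
    ring
  rw [hY] at h2
  have hcases : x a - x q = 0 ∨ x a - x q = 1 := by
    rcases mul_eq_zero.mp h2 with h | h
    · left; exact h
    · right; linarith
  rcases hcases with h | h
  · apply hx
    rw [mem_onesSub]
    refine ⟨x b, fun w => ?_⟩
    rcases eq_or_ne w a with rfl | hw
    · linarith [hxq]
    · exact hconst w hw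
  · apply hy'mem
    rw [mem_onesSub]
    refine ⟨-(x b), fun w => ?_⟩
    have hw' : y' w = chiF {a} w - x w := rfl
    rcases eq_or_ne w a with rfl | hw
    · rw [hw']; simp [chiF_single]; linarith [hxq]
    · rw [hw']; simp [chiF_single, hw]; linarith [hconst w hw]

lemma split_of_not_conn (hcard : 2 ≤ Fintype.card V) {a : V}
    (hnc : ¬ gConnOn ε ({a}ᶜ : Set V)) :
    ∃ A B : Set V, A.Nonempty ∧ B.Nonempty ∧ (∀ w ∈ A, w ≠ a) ∧ (∀ w ∈ B, w ≠ a) ∧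
      (∀ w, w ≠ a → (w ∈ A ∨ w ∈ B)) ∧ (∀ w, ¬(w ∈ A ∧ w ∈ B)) ∧
      (∀ p ∈ A, ∀ q ∈ B, ε p q = 0) := by
  classical
  unfold gConnOn at hnc
  obtain ⟨b, hb⟩ := Fintype.exists_ne_of_one_lt_card (by omega) a
  have hbm : b ∈ ({a}ᶜ : Set V) := by simp [hb]
  have hne : Nonempty ({a}ᶜ : Set V) := ⟨⟨b, hbm⟩⟩
  have hpre : ¬ (SimpleGraph.fromRel (fun p q : ({a}ᶜ : Set V) => 0 < ε p.1 q.1)).Preconnected :=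
    fun h => hnc ((SimpleGraph.connected_iff _).mpr ⟨h, hne⟩)
  rw [SimpleGraph.Preconnected] at hpre
  push_neg at hpre
  obtain ⟨u, v, huv⟩ := hpre
  set Gs := SimpleGraph.fromRel (fun p q : ({a}ᶜ : Set V) => 0 < ε p.1 q.1) with hGs
  refine ⟨{w | ∃ h : w ∈ ({a}ᶜ : Set V), Gs.Reachable u ⟨w, h⟩},
    {w | ∃ h : w ∈ ({a}ᶜ : Set V), ¬ Gs.Reachable u ⟨w, h⟩}, ⟨u.1, u.2, ?_⟩,
    ⟨v.1, v.2, ?_⟩, ?_, ?_, ?_, ?_, ?_⟩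
  · exact SimpleGraph.Reachable.refl _
  · intro h; exact huv h
  · rintro w ⟨hw, -⟩; exact hw
  · rintro w ⟨hw, -⟩; exact hw
  · intro w hw
    by_cases h : Gs.Reachable u ⟨w, by simp [hw]⟩
    · exact Or.inl ⟨by simp [hw], h⟩
    · exact Or.inr ⟨by simp [hw], h⟩
  · rintro w ⟨⟨h1, h2⟩, ⟨h3, h4⟩⟩; exact h4 h2
  · rintro p ⟨hp, hrp⟩ q ⟨hq, hrq⟩
    by_contra h
    have hpq : p ≠ q := by
      intro h'; subst h'; exact hrq hrp
    have hadj : Gs.Adj ⟨p, hp⟩ ⟨q, hq⟩ := by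
      rw [hGs, SimpleGraph.fromRel_adj]
      exact ⟨by simpa [Subtype.ext_iff] using hpq, Or.inl (Nat.pos_of_ne_zero h)⟩
    exact hrq (hrp.trans hadj.reachable)

lemma main2 (hcard : 2 ≤ Fintype.card V) (hsymm : ∀ v w, ε v w = ε w v)
    (hloop : ∀ v, ε v v = 0) {a : V} (hnc : ¬ gConnOn ε ({a}ᶜ : Set V)) :
    ¬ gIrredRep ε (chiF {a}) := by
  classical
  intro hirr
  obtain ⟨A, B, ⟨u, hu⟩, ⟨v, hv⟩, hAa, hBa, hcover, hdisj, hAB⟩ :=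
    split_of_not_conn ε hcard hnc
  have haA : a ∉ A := fun h => hAa a h rfl
  have haB : a ∉ B := fun h => hBa a h rfl
  set x : V → ℤ := fun w => if w = a ∨ w ∈ A then 1 else 0 with hxdef
  set y : V → ℤ := fun w => if w ∈ A then -1 else 0 with hydef
  apply hirr
  refine ⟨x, y, ?_, ?_, ?_, ?_⟩
  · intro h
    obtain ⟨c, hc⟩ := mem_onesSub.mp h
    have h1 := hc a
    have h2 := hc v
    have hvA : v ∉ A := fun h' => hdisj v ⟨h', hv⟩
    simp only [hxdef] at h1 h2
    norm_num at h1
    rw [if_neg (by push_neg; exact ⟨hBa v hv, hvA⟩)] at h2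
    omega
  · intro h
    obtain ⟨c, hc⟩ := mem_onesSub.mp h
    have h1 := hc a
    have h2 := hc u
    simp only [hydef] at h1 h2
    rw [if_neg haA] at h1
    rw [if_pos hu] at h2
    omega
  · have hz : chiF {a} - (x + y) = 0 := by
      funext w
      simp only [Pi.sub_apply, Pi.add_apply, Pi.zero_apply, chiF_single, hxdef, hydef]
      rcases eq_or_ne w a with rfl | hw
      · simp [haA]
      · by_cases hwA : w ∈ A
        · simp [hw, hwA]
        · simp [hw, hwA]
    rw [hz]; exact Submodule.zero_mem _
  · have h2g : 2 * gform ε x y = 0 := by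
      rw [two_gform ε hsymm hloop]
      apply Finset.sum_eq_zero; intro p _
      apply Finset.sum_eq_zero; intro q _
      by_cases hε : ε p q = 0
      · simp [hε]
      · have hS : (y p - y q = 0) ∨ (x p - x q = 0) := by
          by_cases hpA : p ∈ A <;> by_cases hqA : q ∈ A
          · left; simp only [hydef]; rw [if_pos hpA, if_pos hqA]; ring
          · rcases eq_or_ne q a with rfl | hq
            · right; simp [hxdef, hpA]
            · rcases hcover q hq with h | h
              · exact absurd h hqA
              · exact absurd (hAB p hpA q h) hε
          · rcases eq_or_ne p a with rfl | hp
            · right; simp [hxdef, hqA]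
            · rcases hcover p hp with h | h
              · exact absurd h hpA
              · have := hAB q hqA p h
                rw [hsymm p q] at hε
                exact absurd this hε
          · left; simp only [hydef]; rw [if_neg hpA, if_neg hqA]; ring
        rcases hS with h | h
        · rw [h]; ring
        · rw [h]; ring
    linarith

lemma main3 (hcard : 2 ≤ Fintype.card V) (hsymm : ∀ v w, ε v w = ε w v)
    (hloop : ∀ v, ε v v = 0) (hconn : (gGraph ε).Connected)
    (hirr : ∀ v : V, gIrredRep ε (chiF {v}))
    {L₁ L₂ : Submodule ℤ ((V → ℤ) ⧸ onesSub V)}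
    (h1 : L₁ ≠ ⊥) (h2 : L₂ ≠ ⊥) (hinf : L₁ ⊓ L₂ = ⊥) (hsup : L₁ ⊔ L₂ = ⊤)
    (horth : ∀ x y : V → ℤ, (onesSub V).mkQ x ∈ L₁ → (onesSub V).mkQ y ∈ L₂ →
      gform ε x y = 0) : False := by
  classical
  have hmk0 : ∀ z : V → ℤ, (onesSub V).mkQ z = 0 ↔ z ∈ onesSub V := by
    intro z; rw [Submodule.mkQ_apply, Submodule.Quotient.mk_eq_zero]
  have hvert : ∀ v : V, (onesSub V).mkQ (chiF {v}) ∈ L₁ ∨ (onesSub V).mkQ (chiF {v}) ∈ L₂ := by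
    intro v
    have hmem : (onesSub V).mkQ (chiF {v}) ∈ L₁ ⊔ L₂ := by rw [hsup]; exact Submodule.mem_top
    rw [Submodule.mem_sup] at hmem
    obtain ⟨p, hp, q, hq, hpq⟩ := hmem
    obtain ⟨xx, rfl⟩ := (onesSub V).mkQ_surjective p
    obtain ⟨yy, rfl⟩ := (onesSub V).mkQ_surjective q
    by_cases hxx : xx ∈ onesSub V
    · right
      have : (onesSub V).mkQ xx = 0 := (hmk0 xx).mpr hxx
      rw [← hpq, this, zero_add]; exact hq
    by_cases hyy : yy ∈ onesSub V
    · left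
      have : (onesSub V).mkQ yy = 0 := (hmk0 yy).mpr hyy
      rw [← hpq, this, add_zero]; exact hp
    exfalso
    apply hirr v
    refine ⟨xx, yy, hxx, hyy, ?_, le_of_eq (horth xx yy hp hq).symm⟩
    rw [← hmk0]
    rw [map_sub, map_add, hpq]
    abel
  have hnotboth : ∀ v : V, ¬((onesSub V).mkQ (chiF {v}) ∈ L₁ ∧ (onesSub V).mkQ (chiF {v}) ∈ L₂) := by
    rintro v ⟨hv1, hv2⟩
    have : (onesSub V).mkQ (chiF {v}) ∈ L₁ ⊓ L₂ := ⟨hv1, hv2⟩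
    rw [hinf, Submodule.mem_bot] at this
    exact chiF_not_mem hcard v ((hmk0 _).mp this)
  have hA : ∃ v : V, (onesSub V).mkQ (chiF {v}) ∈ L₁ := by
    by_contra h
    push_neg at h
    have hall : ∀ v, (onesSub V).mkQ (chiF {v}) ∈ L₂ := fun v => (hvert v).resolve_left (h v)
    apply h1
    rw [eq_bot_iff]
    intro z hz
    have : z ∈ L₁ ⊓ L₂ := ⟨hz, quot_gen hall z⟩
    rw [hinf] at this; exact this
  have hB : ∃ v : V, (onesSub V).mkQ (chiF {v}) ∈ L₂ := by
    by_contra h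
    push_neg at h
    have hall : ∀ v, (onesSub V).mkQ (chiF {v}) ∈ L₁ := fun v => (hvert v).resolve_right (h v)
    apply h2
    rw [eq_bot_iff]
    intro z hz
    have : z ∈ L₁ ⊓ L₂ := ⟨quot_gen hall z, hz⟩
    rw [hinf] at this; exact this
  obtain ⟨va, hva⟩ := hA
  obtain ⟨vb, hvb⟩ := hB
  have hprop : ∀ p q : V, (gGraph ε).Adj p q →
      (onesSub V).mkQ (chiF {p}) ∈ L₁ → (onesSub V).mkQ (chiF {q}) ∈ L₁ := by
    intro p q hadj hp
    rcases hvert q with h | h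
    · exact h
    exfalso
    rw [gGraph, SimpleGraph.fromRel_adj] at hadj
    obtain ⟨hne, hor⟩ := hadj
    have h0 := horth (chiF {p}) (chiF {q}) hp h
    rw [gform_chi_chi ε hloop hne] at h0
    have hz : ε p q = 0 := by exact_mod_cast neg_eq_zero.mp h0
    rcases hor with h' | h'
    · exact absurd hz h'.ne'
    · rw [hsymm p q] at hz; exact absurd hz h'.ne'
  have := reach_prop hprop (hconn.preconnected va vb) hva
  exact hnotboth vb ⟨this, hvb⟩

def suppSub (A : Set V) : Submodule ℤ (V → ℤ) where
  carrier := {x | ∀ w, w ∉ A → x w = 0}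
  add_mem' := by intro x y hx hy w hw; simp [hx w hw, hy w hw]
  zero_mem' := by intro w hw; rfl
  smul_mem' := by intro c x hx w hw; simp [hx w hw]

lemma mem_suppSub {A : Set V} {x : V → ℤ} : x ∈ suppSub A ↔ ∀ w, w ∉ A → x w = 0 :=
  Iff.rfl

lemma main4 (hcard : 2 ≤ Fintype.card V) (hsymm : ∀ v w, ε v w = ε w v)
    (hloop : ∀ v, ε v v = 0) {a : V} (hnc : ¬ gConnOn ε ({a}ᶜ : Set V)) :
    ∃ (L₁ L₂ : Submodule ℤ ((V → ℤ) ⧸ onesSub V)),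
      L₁ ≠ ⊥ ∧ L₂ ≠ ⊥ ∧ L₁ ⊓ L₂ = ⊥ ∧ L₁ ⊔ L₂ = ⊤ ∧
        ∀ x y : V → ℤ, (onesSub V).mkQ x ∈ L₁ → (onesSub V).mkQ y ∈ L₂ →
          gform ε x y = 0 := by
  classical
  obtain ⟨A, B, ⟨u, hu⟩, ⟨v, hv⟩, hAa, hBa, hcover, hdisj, hAB⟩ :=
    split_of_not_conn ε hcard hnc
  have haA : a ∉ A := fun h => hAa a h rfl
  have haB : a ∉ B := fun h => hBa a h rfl
  have hmk0 : ∀ z : V → ℤ, (onesSub V).mkQ z = 0 ↔ z ∈ onesSub V := by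
    intro z; rw [Submodule.mkQ_apply, Submodule.Quotient.mk_eq_zero]
  have hmkeq : ∀ z w : V → ℤ, (onesSub V).mkQ z = (onesSub V).mkQ w ↔ z - w ∈ onesSub V := by
    intro z w
    rw [Submodule.mkQ_apply, Submodule.mkQ_apply, Submodule.Quotient.eq]
  refine ⟨(suppSub A).map (onesSub V).mkQ, (suppSub B).map (onesSub V).mkQ, ?_, ?_, ?_, ?_, ?_⟩
  · -- L₁ ≠ ⊥
    rw [Submodule.ne_bot_iff]
    refine ⟨(onesSub V).mkQ (chiF {u}), ⟨chiF {u}, ?_, rfl⟩, ?_⟩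
    · intro w hw
      rw [chiF_single]
      rw [if_neg]
      intro h; subst h; exact hw hu
    · intro h
      exact chiF_not_mem hcard u ((hmk0 _).mp h)
  · rw [Submodule.ne_bot_iff]
    refine ⟨(onesSub V).mkQ (chiF {v}), ⟨chiF {v}, ?_, rfl⟩, ?_⟩
    · intro w hw
      rw [chiF_single]
      rw [if_neg]
      intro h; subst h; exact hw hv
    · intro h
      exact chiF_not_mem hcard v ((hmk0 _).mp h)
  · -- inf
    rw [eq_bot_iff]
    rintro z ⟨⟨x, hxA, hxz⟩, ⟨y, hyB, hyz⟩⟩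
    have hxy : (onesSub V).mkQ x = (onesSub V).mkQ y := by rw [hxz, hyz]
    obtain ⟨c, hc⟩ := mem_onesSub.mp ((hmkeq x y).mp hxy)
    have hca : c = 0 := by
      have := hc a
      simp only [Pi.sub_apply] at this
      rw [hxA a haA, hyB a haB] at this
      omega
    have hxeq : x = 0 := by
      funext w
      by_cases hwA : w ∈ A
      · have hwB : w ∉ B := fun h => hdisj w ⟨hwA, h⟩
        have := hc w
        simp only [Pi.sub_apply] at this
        rw [hyB w hwB, hca] at this
        simpa using this
      · exact hxA w hwA
    rw [Submodule.mem_bot, ← hxz, hxeq, map_zero]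
  · -- sup
    rw [eq_top_iff]
    rintro z -
    obtain ⟨x', rfl⟩ := (onesSub V).mkQ_surjective z
    set xA : V → ℤ := fun w => if w ∈ A then x' w - x' a else 0 with hxAdef
    set xB : V → ℤ := fun w => if w ∈ B then x' w - x' a else 0 with hxBdef
    have hkey : (onesSub V).mkQ x' = (onesSub V).mkQ (xA + xB) := by
      rw [hmkeq]
      rw [mem_onesSub]
      refine ⟨x' a, fun w => ?_⟩
      simp only [Pi.sub_apply, Pi.add_apply, hxAdef, hxBdef]
      by_cases hwA : w ∈ A
      · have hwB : w ∉ B := fun h => hdisj w ⟨hwA, h⟩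
        rw [if_pos hwA, if_neg hwB]; ring
      · by_cases hwB : w ∈ B
        · rw [if_neg hwA, if_pos hwB]; ring
        · have hwa : w = a := by
            by_contra hne
            rcases hcover w hne with h | h
            · exact hwA h
            · exact hwB h
          subst hwa
          rw [if_neg hwA, if_neg hwB]; ring
    rw [hkey, map_add]
    refine Submodule.add_mem _ (Submodule.mem_sup_left ⟨xA, ?_, rfl⟩)
      (Submodule.mem_sup_right ⟨xB, ?_, rfl⟩)
    · intro w hw; simp only [hxAdef]; rw [if_neg hw]
    · intro w hw; simp only [hxBdef]; rw [if_neg hw]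
  · -- orthogonality
    rintro x y ⟨x₀, hx₀A, hx₀⟩ ⟨y₀, hy₀B, hy₀⟩
    have hx' : x - x₀ ∈ onesSub V := (hmkeq x x₀).mp hx₀.symm
    have hy' : y - y₀ ∈ onesSub V := (hmkeq y y₀).mp hy₀.symm
    have e1 : gform ε x y = gform ε x₀ y := gform_congr_left ε hsymm hloop y hx'
    have e2 : gform ε x₀ y = gform ε x₀ y₀ := gform_congr_right ε hloop x₀ hy'
    have e3 : gform ε x₀ y₀ = 0 := by
      have h2g : 2 * gform ε x₀ y₀ = 0 := by
        rw [two_gform ε hsymm hloop]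
        apply Finset.sum_eq_zero; intro p _
        apply Finset.sum_eq_zero; intro q _
        by_cases hε : ε p q = 0
        · simp [hε]
        · have hS : (x₀ p - x₀ q = 0) ∨ (y₀ p - y₀ q = 0) := by
            by_cases hpA : p ∈ A <;> by_cases hqA : q ∈ A
            · right
              have hpB : p ∉ B := fun h => hdisj p ⟨hpA, h⟩
              have hqB : q ∉ B := fun h => hdisj q ⟨hqA, h⟩
              rw [hy₀B p hpB, hy₀B q hqB]; ring
            · by_cases hqB : q ∈ B
              · exact absurd (hAB p hpA q hqB) hε
              · right
                have hpB : p ∉ B := fun h => hdisj p ⟨hpA, h⟩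
                rw [hy₀B p hpB, hy₀B q hqB]; ring
            · by_cases hpB : p ∈ B
              · have := hAB q hqA p hpB
                rw [hsymm p q] at hε
                exact absurd this hε
              · right
                have hqB : q ∉ B := fun h => hdisj q ⟨hqA, h⟩
                rw [hy₀B p hpB, hy₀B q hqB]; ring
            · left
              rw [hx₀A p hpA, hx₀A q hqA]; ring
          rcases hS with h | h
          · rw [h]; ring
          · rw [h]; ring
      linarith
    rw [e1, e2, e3]


end aux3x

/-- Lemma 3.3 of the paper: for a connected multigraph `G`, the following are
equivalent: (i) `G` is 2-connected; (ii) every vertex class is irreducible in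
the graph lattice `Λ(G) = ℤ^V/ℤ[V]`; (iii) `Λ(G)` is indecomposable. -/
theorem stmt_5 {V : Type*} [Fintype V] [DecidableEq V] (ε : V → V → ℕ)
    (hcard : 2 ≤ Fintype.card V)
    (hsymm : ∀ v w, ε v w = ε w v) (hloop : ∀ v, ε v v = 0)
    (hconn : (gGraph ε).Connected) :
    ((∀ v : V, gConnOn ε ({v}ᶜ : Set V)) ↔ (∀ v : V, gIrredRep ε (chiF {v}))) ∧
    ((∀ v : V, gIrredRep ε (chiF {v})) ↔
      ¬ ∃ (L₁ L₂ : Submodule ℤ ((V → ℤ) ⧸ onesSub V)),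
        L₁ ≠ ⊥ ∧ L₂ ≠ ⊥ ∧ L₁ ⊓ L₂ = ⊥ ∧ L₁ ⊔ L₂ = ⊤ ∧
          ∀ x y : V → ℤ, (onesSub V).mkQ x ∈ L₁ → (onesSub V).mkQ y ∈ L₂ →
            gform ε x y = 0) := by
  constructor
  · constructor
    · intro h v
      exact main1 ε hcard hsymm hloop hconn h v
    · intro h v
      by_contra hnc
      exact main2 ε hcard hsymm hloop hnc (h v)
  · constructor
    · rintro hirr ⟨L₁, L₂, h1, h2, h3, h4, h5⟩
      exact main3 ε hcard hsymm hloop hconn hirr h1 h2 h3 h4 h5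
    · intro hno v
      by_contra hni
      have hnc : ¬ ∀ a : V, gConnOn ε ({a}ᶜ : Set V) :=
        fun h => hni (main1 ε hcard hsymm hloop hconn h v)
      push_neg at hnc
      obtain ⟨a, ha⟩ := hnc
      exact hno (main4 ε hcard hsymm hloop ha)
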